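/- Let K be a totally real number field and let Ω ⊆ K be an infinite set. Then for every real number N > 0 there exist u, v ∈ Ω with u ≠ v such that for every ring homomorphism σ : K → ℝ one has |σ( ((1/(u − v))² + 1)·(u² + 1) )| > N. -/

import Mathlib

/-- Pigeonhole: an infinite set whose image under an integer-valued function is bounded
has an infinite fiber. -/
lemma stmt_11_pigeon {K : Type*} {s : Set K} (hs : s.Infinite) (f : K → ℤ) (a b : ℤ)
    (hf : ∀ x ∈ s, f x ∈ Set.Icc a b) : ∃ k, {x ∈ s | f x = k}.Infinite := by
  by_contra h
  push_neg at h
  have : s ⊆ ⋃ k ∈ Set.Icc a b, {x ∈ s | f x = k} := by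
    intro x hx
    exact Set.mem_biUnion (hf x hx) ⟨hx, rfl⟩
  exact hs ((Set.Finite.biUnion (Set.finite_Icc a b) fun k _ => h k).subset this)

/-- Key refinement lemma: we can pass to an infinite subset on which each embedding in `s`
either is uniformly large or has uniformly close values. -/
lemma stmt_11_key {K : Type*} [Field K] (c : ℝ) (hc : 0 < c) (s : Finset (K →+* ℝ)) :
    ∀ (Ω' : Set K), Ω'.Infinite → ∃ T ⊆ Ω', T.Infinite ∧ ∀ σ ∈ s,
      (∀ x ∈ T, c < |σ x|) ∨ ∀ x ∈ T, ∀ y ∈ T, |σ x - σ y| < 1 / c := by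
  classical
  induction s using Finset.induction_on with
  | empty => intro Ω' hΩ'; exact ⟨Ω', subset_rfl, hΩ', by simp⟩
  | @insert τ s hτ ih =>
    intro Ω' hΩ'
    obtain ⟨T, hTsub, hTinf, hT⟩ := ih Ω' hΩ'
    by_cases h1 : {x ∈ T | c < |τ x|}.Infinite
    · refine ⟨{x ∈ T | c < |τ x|}, fun x hx => hTsub hx.1, h1, ?_⟩
      intro σ hσ
      rcases Finset.mem_insert.mp hσ with rfl | hσ
      · exact Or.inl fun x hx => hx.2
      · rcases hT σ hσ with h | h
        · exact Or.inl fun x hx => h x hx.1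
        · exact Or.inr fun x hx y hy => h x hx.1 y hy.1
    · have h2 : {x ∈ T | |τ x| ≤ c}.Infinite := by
        rw [Set.not_infinite] at h1
        have : T ⊆ {x ∈ T | c < |τ x|} ∪ {x ∈ T | |τ x| ≤ c} := by
          intro x hx
          rcases lt_or_ge c |τ x| with h | h
          · exact Or.inl ⟨hx, h⟩
          · exact Or.inr ⟨hx, h⟩
        by_contra h2
        rw [Set.not_infinite] at h2
        exact hTinf ((h1.union h2).subset this)
      have hbounds : ∀ x ∈ {x ∈ T | |τ x| ≤ c}, (fun x => ⌊τ x * c⌋) x ∈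
          Set.Icc ⌊(-(c * c) : ℝ)⌋ ⌊(c * c : ℝ)⌋ := by
        intro x hx
        have hb : |τ x * c| ≤ c * c := by
          rw [abs_mul, abs_of_pos hc]
          exact mul_le_mul_of_nonneg_right hx.2 hc.le
        rw [abs_le] at hb
        simp only [Set.mem_Icc]
        exact ⟨Int.floor_le_floor hb.1, Int.floor_le_floor hb.2⟩
      obtain ⟨k, hk⟩ := stmt_11_pigeon h2 (fun x => ⌊τ x * c⌋) ⌊(-(c * c) : ℝ)⌋ ⌊(c * c : ℝ)⌋ hbounds
      refine ⟨{x ∈ {x ∈ T | |τ x| ≤ c} | ⌊τ x * c⌋ = k}, fun x hx => hTsub hx.1.1, hk, ?_⟩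
      intro σ hσ
      rcases Finset.mem_insert.mp hσ with rfl | hσ
      · refine Or.inr fun x hx y hy => ?_
        have hfl : ⌊σ x * c⌋ = ⌊σ y * c⌋ := hx.2.trans hy.2.symm
        have h3 : |σ x * c - σ y * c| < 1 := Int.abs_sub_lt_one_of_floor_eq_floor hfl
        have : |σ x - σ y| * c < 1 := by
          calc |σ x - σ y| * c = |(σ x - σ y) * c| := by
                rw [abs_mul, abs_of_pos hc]
            _ = |σ x * c - σ y * c| := by ring_nf
            _ < 1 := h3
        rw [lt_div_iff₀ hc]
        exact this
      · rcases hT σ hσ with h | h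
        · exact Or.inl fun x hx => h x hx.1.1
        · exact Or.inr fun x hx y hy => h x hx.1.1 y hy.1.1

/-- Let `K` be a totally real number field and `Ω ⊆ K` infinite.  For every
real `N > 0` there exist distinct `u, v ∈ Ω` such that
`|σ(((1/(u−v))² + 1)·(u² + 1))| > N` for every real embedding `σ : K → ℝ`. -/
theorem stmt_11 (K : Type*) [Field K] [NumberField K]
    (htr : ∀ (σ : K →+* ℂ) (y : K), (σ y).im = 0)
    (Ω : Set K) (hΩ : Ω.Infinite) (N : ℝ) (hN : 0 < N) :
    ∃ u ∈ Ω, ∃ v ∈ Ω, u ≠ v ∧ ∀ σ : K →+* ℝ,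
      N < |σ ((((u - v)⁻¹) ^ 2 + 1) * (u ^ 2 + 1))| := by
  set c := Real.sqrt N with hc
  have hcpos : 0 < c := Real.sqrt_pos.mpr hN
  have hc2 : c * c = N := Real.mul_self_sqrt hN.le
  obtain ⟨T, hTsub, hTinf, hT⟩ := stmt_11_key c hcpos Finset.univ Ω hΩ
  obtain ⟨u, hu, v, hv, huv⟩ := hTinf.nontrivial
  refine ⟨u, hTsub hu, v, hTsub hv, huv, fun σ => ?_⟩
  have hab : σ u ≠ σ v := fun h => huv (σ.injective h)
  set a := σ u with ha
  set b := σ v with hb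
  have hσval : σ ((((u - v)⁻¹) ^ 2 + 1) * (u ^ 2 + 1))
      = (((a - b)⁻¹) ^ 2 + 1) * (a ^ 2 + 1) := by
    simp [map_mul, map_add, map_pow, map_inv₀, map_sub, map_one]
    rfl
  rw [hσval]
  have hsubne : a - b ≠ 0 := sub_ne_zero.mpr hab
  have hd : (a - b) ^ 2 > 0 := by positivity
  have hdpos : 0 < ((a - b)⁻¹) ^ 2 := by positivity
  have hEpos : 0 < (((a - b)⁻¹) ^ 2 + 1) * (a ^ 2 + 1) := by positivity
  rw [abs_of_pos hEpos]
  rcases hT σ (Finset.mem_univ σ) with h | h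
  · -- |σ u| large
    have h1 : c < |a| := h u hu
    have h2 : N < a ^ 2 := by
      have : c ^ 2 < |a| ^ 2 := by
        apply pow_lt_pow_left₀ h1 hcpos.le (by norm_num)
      rw [sq_abs] at this
      nlinarith
    nlinarith [hdpos, sq_nonneg a]
  · -- |σ u - σ v| small
    have h1 : |a - b| < 1 / c := h u hu v hv
    have h2 : (a - b) ^ 2 < 1 / N := by
      have : |a - b| ^ 2 < (1 / c) ^ 2 :=
        pow_lt_pow_left₀ h1 (abs_nonneg _) (by norm_num)
      rw [sq_abs] at this
      calc (a - b) ^ 2 < (1 / c) ^ 2 := this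
        _ = 1 / N := by rw [div_pow, one_pow, sq, hc2]
      
    have hinv : ((a - b)⁻¹) ^ 2 * (a - b) ^ 2 = 1 := by
      field_simp
    have hN1 : N * (1 / N) = 1 := by field_simp
    have h3 : N < ((a - b)⁻¹) ^ 2 := by
      nlinarith [hd, hinv, hN1, mul_lt_mul_of_pos_left h2 hN]
    nlinarith [sq_nonneg a, hdpos]
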